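/- Let T be a tree on vertex set V of a multigraph G, rooted at r, that is a disjoint union of maximal branches from r. Suppose U₁,…,U_ℓ are sets of children of r with pairwise disjoint associated branch sets, and for each i, f(U_i) upper-bounds the minimum, over choices of one edge per branch of U_i, of the number of G-edges cut by removing those edges from T (counting each cut edge at least once). If Σ|U_i| = k−1, then the union over i of the corresponding edge removals yields a k-cut of G of value at most Σᵢ f(U_i); in particular Σᵢ f(U_i) ≥ |OPT|, the minimum k-cut value of G. -/

import Mathlib

attribute [local instance] Classical.propDecidable

/-- `P` is a partition of the vertex set into `k` nonempty parts. -/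
def IsPartitionOn {V : Type*} (k : ℕ) (P : Fin k → Finset V) : Prop :=
  (∀ i, (P i).Nonempty) ∧ (∀ i j, i ≠ j → Disjoint (P i) (P j)) ∧ ∀ v : V, ∃ i, v ∈ P i

/-- The number of multigraph edges crossing between parts of `P`. -/
noncomputable def cutVal {V ι : Type*} [Fintype ι] {k : ℕ} (ends : ι → V × V)
    (P : Fin k → Finset V) : ℕ :=
  (Finset.univ.filter fun e : ι => ∀ i, ¬((ends e).1 ∈ P i ∧ (ends e).2 ∈ P i)).card

section AuxTree
variable {V : Type*} {par : V → V} {r : V} {d : V → ℕ}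

private lemma aux_rtg_iter (h : ∀ {v w : V}, True) : True := trivial

private lemma aux_iter_of_rtg {v w : V}
    (h : Relation.ReflTransGen (fun s t => t = par s) v w) :
    ∃ n, w = par^[n] v := by
  induction h with
  | refl => exact ⟨0, rfl⟩
  | tail _ hstep ih =>
      obtain ⟨n, hn⟩ := ih
      exact ⟨n + 1, by rw [hstep, hn, Function.iterate_succ_apply']⟩

private lemma aux_rtg_of_iter (n : ℕ) (v : V) :
    Relation.ReflTransGen (fun s t => t = par s) v (par^[n] v) := by
  induction n with
  | zero => exact Relation.ReflTransGen.refl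
  | succ n ih =>
      exact Relation.ReflTransGen.tail ih (by rw [Function.iterate_succ_apply'])

private lemma aux_d_par_le (hroot : par r = r) (hd : ∀ v, v ≠ r → d v = d (par v) + 1)
    (v : V) : d (par v) ≤ d v := by
  by_cases h : v = r
  · subst h; rw [hroot]
  · rw [hd v h]; omega

private lemma aux_d_iter_le (hroot : par r = r) (hd : ∀ v, v ≠ r → d v = d (par v) + 1)
    (n : ℕ) (v : V) : d (par^[n] v) ≤ d v := by
  induction n with
  | zero => simp
  | succ n ih =>
      rw [Function.iterate_succ_apply']
      exact le_trans (aux_d_par_le hroot hd _) ih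

private lemma aux_iter_r (hroot : par r = r) (n : ℕ) : par^[n] r = r := by
  induction n with
  | zero => rfl
  | succ n ih => rw [Function.iterate_succ_apply', ih, hroot]

private lemma aux_rtg_from_r (hroot : par r = r) {w : V}
    (h : Relation.ReflTransGen (fun s t => t = par s) r w) : w = r := by
  obtain ⟨n, hn⟩ := aux_iter_of_rtg h
  rw [hn, aux_iter_r hroot]

private lemma aux_iter_strict (hroot : par r = r) (hd : ∀ v, v ≠ r → d v = d (par v) + 1)
    {w : V} (hw : w ≠ r) (j : ℕ) (hj : 1 ≤ j) : d (par^[j] w) < d w := by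
  obtain ⟨j', rfl⟩ := Nat.exists_eq_add_of_le hj
  have h1 : d (par^[1 + j'] w) ≤ d (par w) := by
    rw [add_comm, Function.iterate_add_apply]
    simpa using aux_d_iter_le hroot hd j' (par w)
  have h2 : d w = d (par w) + 1 := hd w hw
  omega

/-- two ancestors of `v` with the same depth coincide -/
private lemma aux_unique_depth (hroot : par r = r) (hd : ∀ v, v ≠ r → d v = d (par v) + 1)
    {v w w' : V} {m n : ℕ} (hm : par^[m] v = w) (hn : par^[n] v = w')
    (hdd : d w = d w') : w = w' := by
  wlog hmn : m ≤ n generalizing m n w w'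
  · exact (this hn hm hdd.symm (le_of_not_ge hmn)).symm
  obtain ⟨j, rfl⟩ := Nat.exists_eq_add_of_le hmn
  have hw' : par^[j] w = w' := by
    rw [← hm, ← Function.iterate_add_apply, add_comm]
    exact hn
  rcases Nat.eq_zero_or_pos j with hj | hj
  · subst hj; simpa using hw'
  by_cases hwr : w = r
  · subst hwr; rw [← hw', aux_iter_r hroot]
  · have := aux_iter_strict hroot hd hwr j hj
    rw [hw'] at this; omega

private lemma aux_reach_r (hroot : par r = r) (hd : ∀ v, v ≠ r → d v = d (par v) + 1)
    (v : V) : ∃ n, par^[n] v = r := by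
  have key : ∀ m : ℕ, ∀ v : V, d v ≤ m → ∃ n, par^[n] v = r := by
    intro m
    induction m with
    | zero =>
        intro v hv
        by_cases h : v = r
        · exact ⟨0, h⟩
        · have := hd v h; omega
    | succ m ih =>
        intro v hv
        by_cases h : v = r
        · exact ⟨0, h⟩
        · have h2 := hd v h
          obtain ⟨n, hn⟩ := ih (par v) (by omega)
          exact ⟨n + 1, by rw [Function.iterate_succ_apply]; exact hn⟩
  exact key (d v) v le_rfl

/-- branches of distinct children of `r` are disjoint -/
private lemma aux_branch_key (hroot : par r = r) {u u' x : V} (m : ℕ)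
    (hu : par u = r) (hur' : u' ≠ r)
    (hm : u = par^[m] x) : ∀ n, m ≤ n → u' = par^[n] x → u = u' := by
  intro n hmn hn
  obtain ⟨j, rfl⟩ := Nat.exists_eq_add_of_le hmn
  have hw' : par^[j] u = u' := by
    rw [hm, ← Function.iterate_add_apply, add_comm]; exact hn.symm
  rcases Nat.eq_zero_or_pos j with hj | hj
  · subst hj; simpa using hw'
  · exfalso
    obtain ⟨j', rfl⟩ := Nat.exists_eq_add_of_le hj
    rw [add_comm, Function.iterate_add_apply] at hw'
    simp only [Function.iterate_one] at hw'
    rw [hu, aux_iter_r hroot] at hw'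
    exact hur' hw'.symm

private lemma aux_branch (hroot : par r = r) {u u' x : V}
    (hu : par u = r) (hur : u ≠ r) (hu' : par u' = r) (hur' : u' ≠ r)
    (h1 : Relation.ReflTransGen (fun s t => t = par s) x u)
    (h2 : Relation.ReflTransGen (fun s t => t = par s) x u') : u = u' := by
  obtain ⟨m, hm⟩ := aux_iter_of_rtg h1
  obtain ⟨n, hn⟩ := aux_iter_of_rtg h2
  rcases le_total m n with hmn | hmn
  · exact aux_branch_key hroot m hu hur' hm n hmn hn
  · exact (aux_branch_key hroot n hu' hur hn m hmn hm).symm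

end AuxTree

/-- Knapsack lower bound for the restricted TreeCut algorithm: `T` is a tree on the
vertices of a multigraph `G` rooted at `r` that is a disjoint union of maximal branches
(encoded by parent map `par` and depth `d`). The `U i` are sets of children of `r` with
pairwise disjoint branch sets, `∑ |U i| = k − 1`, and each `f i` upper-bounds the
number of `G`-edges cut by some choice of one edge per branch of `U i` (cutting the
parent edge of a chosen vertex `t u ∈ T(u)` for each `u ∈ U i`). Then the minimum
`k`-cut value `opt` of `G` satisfies `opt ≤ ∑ f i`. -/
theorem stmt_17 {V ι : Type*} [Fintype V] [DecidableEq V] [Fintype ι]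
    (ends : ι → V × V)
    (par : V → V) (r : V) (d : V → ℕ)
    (hroot : par r = r) (hd : ∀ v, v ≠ r → d v = d (par v) + 1)
    (prec : V → V → Prop)
    (hprec : prec = fun a b => Relation.ReflTransGen (fun s t => t = par s) b a)
    (ℓ k : ℕ) (hk : 1 ≤ k)
    (U : Fin ℓ → Finset V)
    (hchild : ∀ i, ∀ u ∈ U i, par u = r ∧ u ≠ r)
    (hdisj : ∀ i j, i ≠ j → Disjoint (U i) (U j))
    (hcard : ∑ i, (U i).card = k - 1)
    (f : Fin ℓ → ℕ)
    (hf : ∀ i, ∃ t : V → V, (∀ u ∈ U i, prec u (t u)) ∧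
      (Finset.univ.filter fun e : ι => ∃ u ∈ U i,
        (prec (t u) (ends e).1 ∧ ¬ prec (t u) (ends e).2) ∨
        (¬ prec (t u) (ends e).1 ∧ prec (t u) (ends e).2)).card ≤ f i)
    (opt : ℕ)
    (hopt : IsLeast
      {c : ℕ | ∃ P : Fin k → Finset V, IsPartitionOn k P ∧ c = cutVal ends P} opt) :
    opt ≤ ∑ i, f i := by
  subst hprec
  classical
  set R : V → V → Prop := fun s t => t = par s with hR
  -- chosen maximal-branch representatives
  let t : Fin ℓ → V → V := fun i => Classical.choose (hf i)
  have ht1 : ∀ i, ∀ u ∈ U i, Relation.ReflTransGen R (t i u) u :=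
    fun i => (Classical.choose_spec (hf i)).1
  have ht2 : ∀ i, (Finset.univ.filter fun e : ι => ∃ u ∈ U i,
      (Relation.ReflTransGen R (ends e).1 (t i u) ∧
        ¬ Relation.ReflTransGen R (ends e).2 (t i u)) ∨
      (¬ Relation.ReflTransGen R (ends e).1 (t i u) ∧
        Relation.ReflTransGen R (ends e).2 (t i u))).card ≤ f i :=
    fun i => (Classical.choose_spec (hf i)).2
  -- the set S of chosen vertices
  set S : Finset V := Finset.univ.biUnion (fun i => (U i).image (t i)) with hS
  have hinj : ∀ i j u u', u ∈ U i → u' ∈ U j → t i u = t j u' → i = j ∧ u = u' := by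
    intro i j u u' hu hu' heq
    obtain ⟨hpu, hur⟩ := hchild i u hu
    obtain ⟨hpu', hur'⟩ := hchild j u' hu'
    have h1 : Relation.ReflTransGen R (t i u) u := ht1 i u hu
    have h2 : Relation.ReflTransGen R (t i u) u' := heq ▸ ht1 j u' hu'
    have huu : u = u' := aux_branch hroot hpu hur hpu' hur' h1 h2
    subst huu
    constructor
    · by_contra hij
      exact (Finset.disjoint_left.1 (hdisj i j hij) hu hu').elim
    · rfl
  have hScard : S.card = k - 1 := by
    rw [hS, Finset.card_biUnion]
    · rw [← hcard]
      refine Finset.sum_congr rfl fun i _ => ?_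
      exact Finset.card_image_of_injOn fun u hu u' hu' heq => (hinj i i u u' hu hu' heq).2
    · intro i _ j _ hij
      rw [Function.onFun, Finset.disjoint_left]
      rintro x hx hx'
      obtain ⟨u, hu, rfl⟩ := Finset.mem_image.1 hx
      obtain ⟨u', hu', heq⟩ := Finset.mem_image.1 hx'
      exact hij ((hinj i j u u' hu hu' heq.symm).1)
  have hrS : r ∉ S := by
    intro hr
    obtain ⟨i, _, hmem⟩ := Finset.mem_biUnion.1 hr
    obtain ⟨u, hu, heq⟩ := Finset.mem_image.1 hmem
    have := ht1 i u hu
    rw [heq] at this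
    exact (hchild i u hu).2 (aux_rtg_from_r hroot this)
  have hSmem : ∀ w ∈ S, ∃ i, ∃ u ∈ U i, t i u = w := by
    intro w hw
    obtain ⟨i, _, hmem⟩ := Finset.mem_biUnion.1 hw
    obtain ⟨u, hu, heq⟩ := Finset.mem_image.1 hmem
    exact ⟨i, u, hu, heq⟩
  -- nearest chosen ancestor map
  let A : V → Finset V := fun v => S.filter (fun w => Relation.ReflTransGen R v w)
  let pick : Finset V → V := fun B =>
    if h : B.Nonempty then Classical.choose (Finset.exists_max_image B d h) else r
  let G : V → V := fun v => pick (A v)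
  have hpick : ∀ B : Finset V, (h : B.Nonempty) →
      pick B ∈ B ∧ ∀ a ∈ B, d a ≤ d (pick B) := by
    intro B h
    have := Classical.choose_spec (Finset.exists_max_image B d h)
    simpa only [pick, dif_pos h] using this
  have hAmem : ∀ v w, w ∈ A v ↔ (w ∈ S ∧ Relation.ReflTransGen R v w) := by
    intro v w; simp [A]
  have hGr : G r = r := by
    have hA : ¬ (A r).Nonempty := by
      rintro ⟨w, hw⟩
      rw [hAmem] at hw
      exact hrS ((aux_rtg_from_r hroot hw.2) ▸ hw.1)
    simp only [G, pick, dif_neg hA]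
  have hGS : ∀ s ∈ S, G s = s := by
    intro s hs
    have hsA : s ∈ A s := (hAmem s s).2 ⟨hs, Relation.ReflTransGen.refl⟩
    have hne : (A s).Nonempty := ⟨s, hsA⟩
    obtain ⟨hmem, hmax⟩ := hpick (A s) hne
    have hGA : G s ∈ A s := hmem
    rw [hAmem] at hGA
    obtain ⟨m, hm⟩ := aux_iter_of_rtg hGA.2
    have hle : d (G s) ≤ d s := hm ▸ aux_d_iter_le hroot hd m s
    have hge : d s ≤ d (G s) := hmax s hsA
    exact aux_unique_depth hroot hd hm.symm (Function.iterate_zero_apply par s) (by omega)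
  have hGT : ∀ v, G v ∈ insert r S := by
    intro v
    by_cases h : (A v).Nonempty
    · have := (hpick (A v) h).1
      rw [hAmem] at this
      exact Finset.mem_insert_of_mem this.1
    · simp only [G, pick, dif_neg h]
      exact Finset.mem_insert_self r S
  have hcross : ∀ a b : V, G a ≠ G b →
      ∃ w ∈ S, ¬ (Relation.ReflTransGen R a w ↔ Relation.ReflTransGen R b w) := by
    intro a b hab
    by_contra hc
    push_neg at hc
    apply hab
    have : A a = A b := by
      ext w
      rw [hAmem, hAmem]
      constructor
      · rintro ⟨hw, h⟩; exact ⟨hw, (hc w hw).1 h⟩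
      · rintro ⟨hw, h⟩; exact ⟨hw, (hc w hw).2 h⟩
    show pick (A a) = pick (A b)
    rw [this]
  -- index the parts
  set T : Finset V := insert r S with hT
  have hTcard : T.card = k := by
    rw [hT, Finset.card_insert_of_notMem hrS, hScard]; omega
  have hVcard : Fintype.card {x // x ∈ T} = k := by rw [Fintype.card_coe, hTcard]
  let eqv : {x // x ∈ T} ≃ Fin k := Fintype.equivFinOfCardEq hVcard
  let vtx : Fin k → V := fun i => (eqv.symm i : V)
  have hvtxT : ∀ i, vtx i ∈ T := fun i => (eqv.symm i).2
  have hvtx_inj : Function.Injective vtx := by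
    intro i j hij
    have : eqv.symm i = eqv.symm j := Subtype.ext hij
    simpa using congrArg eqv this
  have hvtx_surj : ∀ x ∈ T, ∃ i, vtx i = x := by
    intro x hx
    refine ⟨eqv ⟨x, hx⟩, ?_⟩
    simp [vtx]
  have hGfix : ∀ x ∈ T, G x = x := by
    intro x hx
    rcases Finset.mem_insert.1 hx with h | h
    · subst h; exact hGr
    · exact hGS x h
  -- the partition
  let P : Fin k → Finset V := fun i => Finset.univ.filter (fun v => G v = vtx i)
  have hPmem : ∀ i v, v ∈ P i ↔ G v = vtx i := by intro i v; simp [P]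
  have hpart : IsPartitionOn k P := by
    refine ⟨?_, ?_, ?_⟩
    · intro i
      exact ⟨vtx i, (hPmem i (vtx i)).2 (hGfix (vtx i) (hvtxT i))⟩
    · intro i j hij
      rw [Finset.disjoint_left]
      intro v hv hv'
      rw [hPmem] at hv hv'
      exact hij (hvtx_inj (hv ▸ hv'))
    · intro v
      obtain ⟨i, hi⟩ := hvtx_surj (G v) (hGT v)
      exact ⟨i, (hPmem i v).2 hi.symm⟩
  -- opt ≤ cutVal
  have hopt_le : opt ≤ cutVal ends P := hopt.2 ⟨P, hpart, rfl⟩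
  refine le_trans hopt_le ?_
  -- the crossing condition
  have hcond : ∀ e : ι, (∀ i, ¬((ends e).1 ∈ P i ∧ (ends e).2 ∈ P i)) ↔
      G (ends e).1 ≠ G (ends e).2 := by
    intro e
    constructor
    · intro h heq
      obtain ⟨i, hi⟩ := hvtx_surj (G (ends e).1) (hGT (ends e).1)
      exact h i ⟨(hPmem i _).2 hi.symm, (hPmem i _).2 (heq ▸ hi.symm)⟩
    · rintro h i ⟨h1, h2⟩
      rw [hPmem] at h1 h2
      exact h (h1.trans h2.symm)
  have hcut : cutVal ends P =
      (Finset.univ.filter fun e : ι => G (ends e).1 ≠ G (ends e).2).card := by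
    unfold cutVal
    congr 1
    ext e
    simp only [Finset.mem_filter, Finset.mem_univ, true_and]
    exact hcond e
  rw [hcut]
  -- each crossing edge is in some F i
  let F : Fin ℓ → Finset ι := fun i => Finset.univ.filter fun e : ι => ∃ u ∈ U i,
      (Relation.ReflTransGen R (ends e).1 (t i u) ∧
        ¬ Relation.ReflTransGen R (ends e).2 (t i u)) ∨
      (¬ Relation.ReflTransGen R (ends e).1 (t i u) ∧
        Relation.ReflTransGen R (ends e).2 (t i u))
  have hsub : (Finset.univ.filter fun e : ι => G (ends e).1 ≠ G (ends e).2) ⊆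
      Finset.univ.biUnion F := by
    intro e he
    rw [Finset.mem_filter] at he
    obtain ⟨w, hwS, hw⟩ := hcross (ends e).1 (ends e).2 he.2
    obtain ⟨i, u, hu, htu⟩ := hSmem w hwS
    rw [Finset.mem_biUnion]
    refine ⟨i, Finset.mem_univ i, ?_⟩
    rw [Finset.mem_filter]
    refine ⟨Finset.mem_univ e, u, hu, ?_⟩
    rw [htu]
    by_cases h1 : Relation.ReflTransGen R (ends e).1 w
    · by_cases h2 : Relation.ReflTransGen R (ends e).2 w
      · exact absurd (iff_of_true h1 h2) hw
      · exact Or.inl ⟨h1, h2⟩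
    · by_cases h2 : Relation.ReflTransGen R (ends e).2 w
      · exact Or.inr ⟨h1, h2⟩
      · exact absurd (iff_of_false h1 h2) hw
  calc (Finset.univ.filter fun e : ι => G (ends e).1 ≠ G (ends e).2).card
      ≤ (Finset.univ.biUnion F).card := Finset.card_le_card hsub
    _ ≤ ∑ i, (F i).card := Finset.card_biUnion_le
    _ ≤ ∑ i, f i := Finset.sum_le_sum fun i _ => ht2 i
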